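/- Let 𝔄 be the unital associative ℂ-algebra generated by U, V, Y, R subject to the relations [V,Y] = −{U,Y}, [U,Y] = −{Y,Y}, [U,V] = {V,Y} − 2{Y,Y}, [R,Y] = {U,U} − {U,V} + {V,Y}, [R,V] = 2{V,Y} − {Y,Y} − {V,V} − {U,R}, [R,U] = {U,V} + 2{V,Y} − 2{U,Y} − {V,V} − {Y,Y} − {R,Y}. Then the elements Q₁ = U² − {V,Y} + 3Y² and Q₂ = U² + V² − {U,V} − {U,Y} − {R,Y} are central in 𝔄, i.e. Q₁ and Q₂ commute with each of U, V, Y, R. -/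
import Mathlib


noncomputable section

/-- The free algebra on the four generators U, V, Y, R. -/
abbrev FreeStab := FreeAlgebra ℂ (Fin 4)

namespace StabStar

def U : FreeStab := FreeAlgebra.ι ℂ 0
def V : FreeStab := FreeAlgebra.ι ℂ 1
def Y : FreeStab := FreeAlgebra.ι ℂ 2
def R : FreeStab := FreeAlgebra.ι ℂ 3

/-- Commutator [a,b] = ab − ba. -/
def com (a b : FreeStab) : FreeStab := a * b - b * a

/-- Anticommutator {a,b} = ab + ba. -/
def acom (a b : FreeStab) : FreeStab := a * b + b * a

/-- The six defining relations of the universal presentation 𝔄 of 𝔰𝔱𝔞𝔟*. -/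
inductive Rel : FreeStab → FreeStab → Prop
  | r1 : Rel (com V Y) (-(acom U Y))
  | r2 : Rel (com U Y) (-(acom Y Y))
  | r3 : Rel (com U V) (acom V Y - 2 * acom Y Y)
  | r4 : Rel (com R Y) (acom U U - acom U V + acom V Y)
  | r5 : Rel (com R V) (2 * acom V Y - acom Y Y - acom V V - acom U R)
  | r6 : Rel (com R U)
      (acom U V + 2 * acom V Y - 2 * acom U Y - acom V V - acom Y Y - acom R Y)

end StabStar

/-- The universal presentation 𝔄 of the algebra 𝔰𝔱𝔞𝔟*. -/
abbrev StabStarAlg := RingQuot StabStar.Rel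

namespace Stab14

def u : StabStarAlg := RingQuot.mkAlgHom ℂ StabStar.Rel StabStar.U
def v : StabStarAlg := RingQuot.mkAlgHom ℂ StabStar.Rel StabStar.V
def y : StabStarAlg := RingQuot.mkAlgHom ℂ StabStar.Rel StabStar.Y
def r : StabStarAlg := RingQuot.mkAlgHom ℂ StabStar.Rel StabStar.R

lemma huy : u * y = y * u - 2 * (y * y) := by
  have h := RingQuot.mkAlgHom_rel ℂ StabStar.Rel.r2
  simp only [StabStar.com, StabStar.acom, map_sub, map_add, map_mul, map_neg, map_ofNat] at h
  rw [← sub_eq_zero] at h ⊢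
  simp only [u, y]
  rw [← h]; noncomm_ring

lemma hvy : v * y = y * v - u * y - y * u := by
  have h := RingQuot.mkAlgHom_rel ℂ StabStar.Rel.r1
  simp only [StabStar.com, StabStar.acom, map_sub, map_add, map_mul, map_neg, map_ofNat] at h
  rw [← sub_eq_zero] at h ⊢
  simp only [u, v, y]
  rw [← h]; noncomm_ring

lemma hvu : v * u = u * v - v * y - y * v + 4 * (y * y) := by
  have h := RingQuot.mkAlgHom_rel ℂ StabStar.Rel.r3
  simp only [StabStar.com, StabStar.acom, map_sub, map_add, map_mul, map_neg, map_ofNat] at h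
  rw [← sub_eq_zero] at h
  rw [← neg_eq_zero] at h
  rw [← sub_eq_zero]
  simp only [u, v, y]
  rw [← h]; noncomm_ring

lemma hry : r * y = y * r + 2 * (u * u) - u * v - v * u + v * y + y * v := by
  have h := RingQuot.mkAlgHom_rel ℂ StabStar.Rel.r4
  simp only [StabStar.com, StabStar.acom, map_sub, map_add, map_mul, map_neg, map_ofNat] at h
  rw [← sub_eq_zero] at h ⊢
  simp only [u, v, y, r]
  rw [← h]; noncomm_ring

lemma hru : r * u = u * r + u * v + v * u + 2 * (v * y) + 2 * (y * v) - 2 * (u * y)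
    - 2 * (y * u) - 2 * (v * v) - 2 * (y * y) - r * y - y * r := by
  have h := RingQuot.mkAlgHom_rel ℂ StabStar.Rel.r6
  simp only [StabStar.com, StabStar.acom, map_sub, map_add, map_mul, map_neg, map_ofNat] at h
  rw [← sub_eq_zero] at h ⊢
  simp only [u, v, y, r]
  rw [← h]; noncomm_ring

lemma hrv : r * v = v * r + 2 * (v * y) + 2 * (y * v) - 2 * (y * y) - 2 * (v * v)
    - u * r - r * u := by
  have h := RingQuot.mkAlgHom_rel ℂ StabStar.Rel.r5
  simp only [StabStar.com, StabStar.acom, map_sub, map_add, map_mul, map_neg, map_ofNat] at h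
  rw [← sub_eq_zero] at h ⊢
  simp only [u, v, y, r]
  rw [← h]; noncomm_ring

lemma huy' (c : StabStarAlg) : u * (y * c) = (y * u - 2 * (y * y)) * c := by
  rw [← mul_assoc, huy]
lemma hvy' (c : StabStarAlg) : v * (y * c) = (y * v - u * y - y * u) * c := by
  rw [← mul_assoc, hvy]
lemma hvu' (c : StabStarAlg) : v * (u * c) = (u * v - v * y - y * v + 4 * (y * y)) * c := by
  rw [← mul_assoc, hvu]
lemma hry' (c : StabStarAlg) : r * (y * c) =
    (y * r + 2 * (u * u) - u * v - v * u + v * y + y * v) * c := by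
  rw [← mul_assoc, hry]
lemma hru' (c : StabStarAlg) : r * (u * c) = (u * r + u * v + v * u + 2 * (v * y) + 2 * (y * v)
    - 2 * (u * y) - 2 * (y * u) - 2 * (v * v) - 2 * (y * y) - r * y - y * r) * c := by
  rw [← mul_assoc, hru]
lemma hrv' (c : StabStarAlg) : r * (v * c) = (v * r + 2 * (v * y) + 2 * (y * v) - 2 * (y * y)
    - 2 * (v * v) - u * r - r * u) * c := by
  rw [← mul_assoc, hrv]

lemma m3 (a : StabStarAlg) : 3 * a = a + a + a := by noncomm_ring
lemma m4 (a : StabStarAlg) : 4 * a = a + a + a + a := by noncomm_ring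

-- Rewrite all products to the normal order y < u < v < r using the six derived
-- rewrite rules, then compare normal forms.
set_option maxHeartbeats 2000000 in
lemma central (g : StabStarAlg) (hg : g = u ∨ g = v ∨ g = y ∨ g = r) :
    Commute (u ^ 2 - (v * y + y * v) + 3 * y ^ 2) g ∧
    Commute (u ^ 2 + v ^ 2 - (u * v + v * u) - (u * y + y * u) - (r * y + y * r)) g := by
  constructor <;>
  · show _ * g = g * _
    rcases hg with rfl | rfl | rfl | rfl <;>
    · simp only [pow_two, two_mul, m3, m4, mul_add, add_mul, mul_sub, sub_mul, neg_mul,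
        mul_neg, mul_assoc, huy, hvy, hvu, hry, hru, hrv, huy', hvy', hvu', hry', hru', hrv']
      noncomm_ring

end Stab14

/-- the elements Q₁ = U² − {V,Y} + 3Y² and
Q₂ = U² + V² − {U,V} − {U,Y} − {R,Y} are central in 𝔄. -/
theorem stmt14 :
    let m := RingQuot.mkAlgHom ℂ StabStar.Rel
    let u := m StabStar.U; let v := m StabStar.V; let y := m StabStar.Y; let r := m StabStar.R
    let Q₁ := u ^ 2 - (v * y + y * v) + 3 * y ^ 2
    let Q₂ := u ^ 2 + v ^ 2 - (u * v + v * u) - (u * y + y * u) - (r * y + y * r)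
    (Commute Q₁ u ∧ Commute Q₁ v ∧ Commute Q₁ y ∧ Commute Q₁ r) ∧
    (Commute Q₂ u ∧ Commute Q₂ v ∧ Commute Q₂ y ∧ Commute Q₂ r) := by
  exact ⟨⟨(Stab14.central Stab14.u (Or.inl rfl)).1, (Stab14.central Stab14.v (Or.inr (Or.inl rfl))).1,
          (Stab14.central Stab14.y (Or.inr (Or.inr (Or.inl rfl)))).1,
          (Stab14.central Stab14.r (Or.inr (Or.inr (Or.inr rfl)))).1⟩,
         (Stab14.central Stab14.u (Or.inl rfl)).2, (Stab14.central Stab14.v (Or.inr (Or.inl rfl))).2,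
         (Stab14.central Stab14.y (Or.inr (Or.inr (Or.inl rfl)))).2,
         (Stab14.central Stab14.r (Or.inr (Or.inr (Or.inr rfl)))).2⟩
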